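/- arXiv:2406.04981 — 2 statements merged into one kernel-verified Lean document; each statement's English description precedes it below -/
import Mathlib

section
/- (All separators of maximally inflated balls are max-margin) Let {(x_i, y_i)}_{i=1}^m have ℓ_p margin exactly ε*, i.e., max_{w ≠ 0} min_i y_i⟨w, x_i⟩/‖w‖_{p*} = ε*. Then any w that separates the inflated dataset, i.e., satisfies y_i⟨w, x'_i⟩ ≥ 0 for all x'_i with ‖x'_i − x_i‖_p ≤ ε* and all i, is an ℓ_r max-margin separator of the inflated dataset for every r ≥ 1; in particular the max-margin value min_i (y_i⟨w, x_i⟩ − ε*‖w‖_{p*})/‖w‖_{r*} is 0 for every separating w. -/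
noncomputable def lpNorm {d : ℕ} (p : ℝ) (w : Fin d → ℝ) : ℝ :=
  (∑ j, |w j| ^ p) ^ (1 / p)

def dotp {d : ℕ} (w x : Fin d → ℝ) : ℝ := ∑ j, w j * x j

lemma lpNorm_pos {d : ℕ} {s : ℝ} {w : Fin d → ℝ} (hw : w ≠ 0) :
    0 < lpNorm s w := by
  obtain ⟨j, hj⟩ : ∃ j, w j ≠ 0 := by
    by_contra h; push_neg at h; exact hw (funext h)
  apply Real.rpow_pos_of_pos
  refine Finset.sum_pos' (fun k _ => Real.rpow_nonneg (abs_nonneg _) _)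
    ⟨j, Finset.mem_univ j, Real.rpow_pos_of_pos (abs_pos.mpr hj) _⟩

lemma mul_sign_eq_abs (x : ℝ) : x * Real.sign x = |x| := by
  rcases lt_trichotomy x 0 with h|h|h
  · simp [Real.sign_of_neg h, abs_of_neg h]
  · simp [h]
  · simp [Real.sign_of_pos h, abs_of_pos h]

lemma range_set_eq {m : ℕ} (f : Fin m → ℝ) :
    {v : ℝ | ∃ i, v = f i} = Set.range f := by ext v; simp [eq_comm]

lemma bdd_range {m : ℕ} (f : Fin m → ℝ) : BddBelow {v : ℝ | ∃ i, v = f i} := by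
  rw [range_set_eq]; exact (Set.finite_range f).bddBelow

lemma sInf_mem_range {m : ℕ} (hm : 0 < m) (f : Fin m → ℝ) :
    ∃ i, sInf {v : ℝ | ∃ i, v = f i} = f i := by
  have : Nonempty (Fin m) := ⟨⟨0, hm⟩⟩
  rw [range_set_eq]
  exact ((Set.range_nonempty f).csInf_mem (Set.finite_range f)).imp fun i h => h.symm

lemma holder_lb {d : ℕ} {p q : ℝ} (hpq : p.HolderConjugate q) {w xi : Fin d → ℝ}
    (hw : w ≠ 0) {ε yi : ℝ} (hε : 0 ≤ ε) (hyi : yi = 1 ∨ yi = -1)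
    (hsep : ∀ x' : Fin d → ℝ, lpNorm p (x' - xi) ≤ ε → 0 ≤ yi * dotp w x') :
    ε * lpNorm q w ≤ yi * dotp w xi := by
  set N := lpNorm q w with hN
  have hNpos : 0 < N := lpNorm_pos hw
  have hq1 : 1 < q := hpq.symm.lt
  have hq0 : 0 < q := by linarith
  have hq1' : q - 1 ≠ 0 := by intro h; linarith [h]
  have hp0 : p ≠ 0 := hpq.pos.ne'
  have hqp : (q - 1) * p = q := hpq.symm.sub_one_mul_conj
  set v : Fin d → ℝ := fun j => Real.sign (w j) * |w j| ^ (q-1) / N ^ (q-1) with hv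
  have hS : N ^ q = ∑ j, |w j| ^ q := by
    rw [hN]; unfold lpNorm
    rw [← Real.rpow_mul (by positivity), one_div_mul_cancel hq0.ne', Real.rpow_one]
  have habs : ∀ j, |w j| * |w j| ^ (q-1) = |w j| ^ q := by
    intro j
    rcases eq_or_ne (w j) 0 with h|h
    · simp [h, Real.zero_rpow hq1', Real.zero_rpow hq0.ne']
    · have h0 : 0 < |w j| := abs_pos.mpr h
      nth_rewrite 1 [← Real.rpow_one |w j|]
      rw [← Real.rpow_add h0]; ring_nf
  have hdot : dotp w v = N := by
    unfold dotp
    have hterm : ∀ j, w j * v j = |w j| ^ q / N ^ (q-1) := by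
      intro j
      rw [hv]
      simp only []
      rw [mul_div_assoc, ← mul_assoc, mul_sign_eq_abs, ← mul_div_assoc, habs j]
    rw [Finset.sum_congr rfl (fun j _ => hterm j), ← Finset.sum_div, ← hS,
      ← Real.rpow_sub hNpos]
    norm_num
  have hvnorm : ∑ j, |v j| ^ p = 1 := by
    have hterm : ∀ j, |v j| ^ p = |w j| ^ q / N ^ q := by
      intro j
      rcases eq_or_ne (w j) 0 with h|h
      · simp [hv, h, Real.zero_rpow hq1', Real.zero_rpow hp0, Real.zero_rpow hq0.ne']
      · have h0 : 0 < |w j| := abs_pos.mpr h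
        have hsgn : |Real.sign (w j)| = 1 := by
          rcases lt_trichotomy (w j) 0 with hh|hh|hh
          · simp [Real.sign_of_neg hh]
          · exact absurd hh h
          · simp [Real.sign_of_pos hh]
        have hvj : |v j| = |w j| ^ (q-1) / N ^ (q-1) := by
          rw [hv]; simp only []
          rw [abs_div, abs_mul, hsgn, one_mul,
            abs_of_nonneg (Real.rpow_nonneg (abs_nonneg _) _),
            abs_of_nonneg (Real.rpow_nonneg hNpos.le _)]
        rw [hvj, Real.div_rpow (Real.rpow_nonneg (abs_nonneg _) _)
            (Real.rpow_nonneg hNpos.le _),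
          ← Real.rpow_mul (abs_nonneg _), ← Real.rpow_mul hNpos.le, hqp]
    rw [Finset.sum_congr rfl (fun j _ => hterm j), ← Finset.sum_div, ← hS,
      div_self (by positivity)]
  set x' : Fin d → ℝ := fun j => xi j - (ε * yi) * v j with hx'
  have hyabs : |yi| = 1 := by rcases hyi with h|h <;> simp [h]
  have hdist : lpNorm p (x' - xi) ≤ ε := by
    unfold lpNorm
    have hterm : ∀ j, |(x' - xi) j| ^ p = ε ^ p * |v j| ^ p := by
      intro j
      have : (x' - xi) j = -((ε * yi) * v j) := by simp [hx']
      rw [this, abs_neg, abs_mul, abs_mul, hyabs, mul_one, abs_of_nonneg hε,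
        Real.mul_rpow hε (abs_nonneg _)]
    rw [Finset.sum_congr rfl (fun j _ => hterm j), ← Finset.mul_sum, hvnorm, mul_one,
      ← Real.rpow_mul hε, mul_one_div_cancel hp0, Real.rpow_one]
  have hx'dot : dotp w x' = dotp w xi - (ε * yi) * dotp w v := by
    simp only [dotp, hx', mul_sub, Finset.sum_sub_distrib, Finset.mul_sum]
    congr 1
    exact Finset.sum_congr rfl fun j _ => by ring
  have h0 := hsep x' hdist
  rw [hx'dot, hdot] at h0
  have hy2 : yi * yi = 1 := by rcases hyi with h|h <;> rw [h] <;> norm_num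
  have hexp : yi * (dotp w xi - ε * yi * N) = yi * dotp w xi - ε * (yi * yi) * N := by
    ring
  rw [hexp, hy2] at h0
  linarith

/-- If the dataset has `ℓ_p` margin exactly `ε*`, then any separator of the
maximally inflated balls is an `ℓ_r` max-margin separator of the inflated
dataset, with max-margin value `0`. -/
theorem all_separators_are_max_margin {d m : ℕ} (hm : 0 < m)
    (p q r rc : ℝ) (hpq : p.HolderConjugate q) (hr : r.HolderConjugate rc)
    (xs : Fin m → Fin d → ℝ) (ys : Fin m → ℝ) (hy : ∀ i, ys i = 1 ∨ ys i = -1)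
    (εstar : ℝ) (hεstar : 0 ≤ εstar)
    (hmargin : IsGreatest {γ : ℝ | ∃ w : Fin d → ℝ, w ≠ 0 ∧
        γ = sInf {v : ℝ | ∃ i : Fin m, v = ys i * dotp w (xs i) / lpNorm q w}}
      εstar) :
    ∀ w : Fin d → ℝ, w ≠ 0 →
      (∀ i : Fin m, ∀ x' : Fin d → ℝ, lpNorm p (x' - xs i) ≤ εstar →
        0 ≤ ys i * dotp w x') →
      (sInf {v : ℝ | ∃ i : Fin m,
          v = (ys i * dotp w (xs i) - εstar * lpNorm q w) / lpNorm rc w} = 0 ∧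
       IsGreatest {γ : ℝ | ∃ u : Fin d → ℝ, u ≠ 0 ∧
          γ = sInf {v : ℝ | ∃ i : Fin m,
            v = (ys i * dotp u (xs i) - εstar * lpNorm q u) / lpNorm rc u}}
        (sInf {v : ℝ | ∃ i : Fin m,
          v = (ys i * dotp w (xs i) - εstar * lpNorm q w) / lpNorm rc w})) := by
  intro w hw hsep
  -- every nonzero u has inflated-margin sInf ≤ 0
  have key : ∀ u : Fin d → ℝ, u ≠ 0 →
      sInf {v : ℝ | ∃ i : Fin m,
        v = (ys i * dotp u (xs i) - εstar * lpNorm q u) / lpNorm rc u} ≤ 0 := by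
    intro u hu
    have hNq : 0 < lpNorm q u := lpNorm_pos hu
    have hNrc : 0 < lpNorm rc u := lpNorm_pos hu
    have h1 : sInf {v : ℝ | ∃ i : Fin m, v = ys i * dotp u (xs i) / lpNorm q u}
        ≤ εstar := hmargin.2 ⟨u, hu, rfl⟩
    obtain ⟨i0, hi0⟩ := sInf_mem_range hm (fun i => ys i * dotp u (xs i) / lpNorm q u)
    rw [hi0] at h1
    have h3 : ys i0 * dotp u (xs i0) - εstar * lpNorm q u ≤ 0 := by
      rw [div_le_iff₀ hNq] at h1; linarith
    have h4 : (ys i0 * dotp u (xs i0) - εstar * lpNorm q u) / lpNorm rc u ≤ 0 :=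
      div_nonpos_of_nonpos_of_nonneg h3 hNrc.le
    exact le_trans (csInf_le
      (bdd_range (fun i => (ys i * dotp u (xs i) - εstar * lpNorm q u) / lpNorm rc u))
      ⟨i0, rfl⟩) h4
  have hNrcw : 0 < lpNorm rc w := lpNorm_pos hw
  have hzero : sInf {v : ℝ | ∃ i : Fin m,
      v = (ys i * dotp w (xs i) - εstar * lpNorm q w) / lpNorm rc w} = 0 := by
    refine le_antisymm (key w hw) ?_
    refine le_csInf ⟨_, ⟨⟨0, hm⟩, rfl⟩⟩ ?_
    rintro b ⟨i, rfl⟩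
    have := holder_lb hpq hw hεstar (hy i) (hsep i)
    have hnum : 0 ≤ ys i * dotp w (xs i) - εstar * lpNorm q w := by linarith
    positivity
  refine ⟨hzero, ⟨⟨w, hw, rfl⟩, ?_⟩⟩
  rintro γ ⟨u, hu, rfl⟩
  rw [hzero]
  exact key u hu
end

section
/- Let σ₁,…,σ_m be independent Rademacher random variables and x₁,…,x_m ∈ ℝ^d. For the class H = {x ↦ ⟨w, x⟩ : ‖w‖₂ ≤ W} and the robustly perturbed class H̃ = {(x,y) ↦ min_{‖x'−x‖_p ≤ ε} y⟨w, x'⟩ : ‖w‖₂ ≤ W}, the empirical Rademacher complexity satisfies Rad(H̃) ≤ Rad(H) + (εW / (2√m)) · max(d^{1/p* − 1/2}, 1). -/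
/-- A Rademacher sign from a Boolean. -/
def rsign (b : Bool) : ℝ := if b then 1 else -1

lemma lpNorm_nonneg {d : ℕ} (p : ℝ) (w : Fin d → ℝ) : 0 ≤ lpNorm p w := by
  unfold lpNorm
  positivity

lemma lpNorm_zero {d : ℕ} {p : ℝ} (hp : p ≠ 0) : lpNorm p (0 : Fin d → ℝ) = 0 := by
  unfold lpNorm
  simp only [Pi.zero_apply, abs_zero, Real.zero_rpow hp, Finset.sum_const, smul_zero]
  exact Real.zero_rpow (one_div_ne_zero hp)

lemma lpNorm_smul {d : ℕ} {p : ℝ} (hp : 0 < p) (a : ℝ) (w : Fin d → ℝ) :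
    lpNorm p (a • w) = |a| * lpNorm p w := by
  unfold lpNorm
  have h1 : ∀ j, |(a • w) j| ^ p = |a| ^ p * |w j| ^ p := by
    intro j
    simp [Pi.smul_apply, abs_mul, Real.mul_rpow (abs_nonneg a) (abs_nonneg (w j))]
  simp_rw [h1, ← Finset.mul_sum]
  rw [Real.mul_rpow (by positivity) (by positivity), ← Real.rpow_mul (abs_nonneg a),
    mul_one_div, div_self hp.ne', Real.rpow_one]

lemma dotp_holder {d : ℕ} {p q : ℝ} (hpq : p.HolderConjugate q) (w v : Fin d → ℝ) :
    |dotp w v| ≤ lpNorm q w * lpNorm p v := by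
  unfold dotp lpNorm
  calc |∑ j, w j * v j| ≤ ∑ j, |w j * v j| := Finset.abs_sum_le_sum_abs _ _
    _ = ∑ j, |w j| * |v j| := by simp_rw [abs_mul]
    _ ≤ _ := Real.inner_le_Lp_mul_Lq_of_nonneg Finset.univ hpq.symm
        (fun i _ => abs_nonneg _) (fun i _ => abs_nonneg _)

lemma exists_dual {d : ℕ} {p q : ℝ} (hpq : p.HolderConjugate q) (w : Fin d → ℝ) :
    ∃ v : Fin d → ℝ, lpNorm p v ≤ 1 ∧ dotp w v = lpNorm q w := by
  have hq1 : 1 < q := hpq.symm.lt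
  have hq0 : (0:ℝ) < q := by linarith
  by_cases hw : lpNorm q w = 0
  · exact ⟨0, by simp [lpNorm_zero hpq.ne_zero, zero_le_one], by simp [dotp, hw]⟩
  have hc : 0 < lpNorm q w := (lpNorm_nonneg q w).lt_of_ne' hw
  set c := lpNorm q w with hcdef
  refine ⟨fun j => (if 0 ≤ w j then 1 else -1) * |w j| ^ (q - 1) / c ^ (q - 1), ?_, ?_⟩
  · have habs : ∀ j : Fin d,
        |(if 0 ≤ w j then (1:ℝ) else -1) * |w j| ^ (q - 1) / c ^ (q - 1)| ^ p
          = |w j| ^ q / c ^ q := by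
      intro j
      rw [abs_div, abs_mul]
      have h1 : |if 0 ≤ w j then (1:ℝ) else -1| = 1 := by split <;> norm_num
      rw [h1, one_mul, abs_of_nonneg (Real.rpow_nonneg (abs_nonneg _) _),
        abs_of_nonneg (Real.rpow_nonneg hc.le _), Real.div_rpow (by positivity) (by positivity),
        ← Real.rpow_mul (abs_nonneg _), ← Real.rpow_mul hc.le, hpq.symm.sub_one_mul_conj]
    have hcq : c ^ q = ∑ j, |w j| ^ q := by
      rw [hcdef]
      unfold lpNorm
      rw [← Real.rpow_mul (by positivity), one_div, inv_mul_cancel₀ hq0.ne', Real.rpow_one]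
    unfold lpNorm
    simp_rw [habs, ← Finset.sum_div, ← hcq, div_self (by positivity : c ^ q ≠ 0)]
    rw [Real.one_rpow]
  · have hterm : ∀ j : Fin d,
        w j * ((if 0 ≤ w j then (1:ℝ) else -1) * |w j| ^ (q - 1) / c ^ (q - 1))
          = |w j| ^ q / c ^ (q - 1) := by
      intro j
      rw [mul_div_assoc', ← mul_assoc]
      congr 1
      have h1 : w j * (if 0 ≤ w j then (1:ℝ) else -1) = |w j| := by
        split <;> rename_i h
        · rw [mul_one, abs_of_nonneg h]
        · rw [abs_of_neg (not_le.mp h)]; ring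
      rw [h1]
      rcases eq_or_ne (w j) 0 with h0 | h0
      · simp [h0, Real.zero_rpow (by linarith : q - 1 ≠ 0), Real.zero_rpow hq0.ne']
      · nth_rewrite 1 [← Real.rpow_one (|w j|)]
        rw [← Real.rpow_add (abs_pos.mpr h0)]
        congr 1
        ring
    unfold dotp
    simp_rw [hterm, ← Finset.sum_div]
    have hcq : ∑ j, |w j| ^ q = c ^ q := by
      rw [hcdef]
      unfold lpNorm
      rw [← Real.rpow_mul (by positivity), one_div, inv_mul_cancel₀ hq0.ne', Real.rpow_one]
    rw [hcq, ← Real.rpow_sub hc]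
    simp

lemma dotp_sub {d : ℕ} (w x v : Fin d → ℝ) : dotp w (x - v) = dotp w x - dotp w v := by
  unfold dotp
  rw [← Finset.sum_sub_distrib]
  exact Finset.sum_congr rfl fun j _ => by simp [Pi.sub_apply]; ring

lemma dotp_smul {d : ℕ} (a : ℝ) (w v : Fin d → ℝ) : dotp w (a • v) = a * dotp w v := by
  unfold dotp
  rw [Finset.mul_sum]
  exact Finset.sum_congr rfl fun j _ => by simp [Pi.smul_apply]; ring

lemma sInf_robust {d : ℕ} {p q : ℝ} (hpq : p.HolderConjugate q) (x w : Fin d → ℝ)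
    {y : ℝ} (hy : y = 1 ∨ y = -1) {ε : ℝ} (hε : 0 ≤ ε) :
    sInf {u : ℝ | ∃ x' : Fin d → ℝ, lpNorm p (x' - x) ≤ ε ∧ u = y * dotp w x'}
      = y * dotp w x - ε * lpNorm q w := by
  have hy1 : |y| = 1 := by rcases hy with h | h <;> simp [h]
  have hy2 : y * y = 1 := by rcases hy with h | h <;> simp [h]
  have hlow : ∀ u ∈ {u : ℝ | ∃ x' : Fin d → ℝ, lpNorm p (x' - x) ≤ ε ∧ u = y * dotp w x'},
      y * dotp w x - ε * lpNorm q w ≤ u := by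
    rintro u ⟨x', hx', rfl⟩
    have h1 : dotp w x' = dotp w x + dotp w (x' - x) := by rw [dotp_sub]; ring
    rw [h1, mul_add]
    have h2 : -(ε * lpNorm q w) ≤ y * dotp w (x' - x) := by
      have h3 : |y * dotp w (x' - x)| ≤ ε * lpNorm q w := by
        rw [abs_mul, hy1, one_mul]
        calc |dotp w (x' - x)| ≤ lpNorm q w * lpNorm p (x' - x) := dotp_holder hpq w _
          _ ≤ lpNorm q w * ε := by
              exact mul_le_mul_of_nonneg_left hx' (lpNorm_nonneg q w)
          _ = ε * lpNorm q w := mul_comm _ _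
        
      linarith [neg_abs_le (y * dotp w (x' - x))]
    linarith
  obtain ⟨v, hv1, hv2⟩ := exists_dual hpq w
  have hmem : y * dotp w x - ε * lpNorm q w ∈
      {u : ℝ | ∃ x' : Fin d → ℝ, lpNorm p (x' - x) ≤ ε ∧ u = y * dotp w x'} := by
    refine ⟨x - (ε * y) • v, ?_, ?_⟩
    · have : x - (ε * y) • v - x = (-(ε * y)) • v := by
        rw [sub_sub_cancel_left, neg_smul]
      rw [this, lpNorm_smul hpq.pos, abs_neg, abs_mul, hy1, mul_one, abs_of_nonneg hε]
      calc ε * lpNorm p v ≤ ε * 1 := mul_le_mul_of_nonneg_left hv1 hε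
        _ = ε := mul_one ε
    · rw [dotp_sub, dotp_smul, hv2, mul_sub]
      have h4 : y * (ε * y * lpNorm q w) = ε * lpNorm q w := by
        rw [show y * (ε * y * lpNorm q w) = y * y * (ε * lpNorm q w) by ring, hy2, one_mul]
      rw [h4]
  exact le_antisymm (csInf_le ⟨_, hlow⟩ hmem) (le_csInf ⟨_, hmem⟩ hlow)

lemma lpNorm_le_two_of_ge {d : ℕ} {q : ℝ} (hq2 : 2 ≤ q) (w : Fin d → ℝ) :
    lpNorm q w ≤ lpNorm 2 w := by
  have hq0 : (0:ℝ) < q := by linarith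
  set A := lpNorm 2 w with hA
  have hA0 : 0 ≤ A := lpNorm_nonneg 2 w
  have hjA : ∀ j, |w j| ≤ A := by
    intro j
    have h1 : |w j| ^ (2:ℝ) ≤ ∑ i, |w i| ^ (2:ℝ) :=
      Finset.single_le_sum (f := fun i => |w i| ^ (2:ℝ)) (fun i _ => by positivity)
        (Finset.mem_univ j)
    have h2 : (|w j| ^ (2:ℝ)) ^ ((1:ℝ)/2) ≤ (∑ i, |w i| ^ (2:ℝ)) ^ ((1:ℝ)/2) :=
      Real.rpow_le_rpow (by positivity) h1 (by norm_num)
    rwa [← Real.rpow_mul (abs_nonneg _), show (2:ℝ) * (1/2) = 1 by norm_num,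
      Real.rpow_one] at h2
  have hsum : ∑ j, |w j| ^ q ≤ A ^ q := by
    have hterm : ∀ j, |w j| ^ q ≤ |w j| ^ (2:ℝ) * A ^ (q - 2) := by
      intro j
      rcases eq_or_lt_of_le hq2 with h2 | h2
      · rw [← h2]; simp
      rcases eq_or_ne (w j) 0 with h0 | h0
      · rw [h0]
        simp only [abs_zero]
        rw [Real.zero_rpow hq0.ne', Real.zero_rpow (by norm_num : (2:ℝ) ≠ 0), zero_mul]
      · nth_rewrite 1 [show q = 2 + (q - 2) by ring]
        rw [Real.rpow_add (abs_pos.mpr h0)]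
        exact mul_le_mul_of_nonneg_left
          (Real.rpow_le_rpow (abs_nonneg _) (hjA j) (by linarith)) (by positivity)
    calc ∑ j, |w j| ^ q ≤ ∑ j, |w j| ^ (2:ℝ) * A ^ (q - 2) :=
          Finset.sum_le_sum fun j _ => hterm j
      _ = (∑ j, |w j| ^ (2:ℝ)) * A ^ (q - 2) := by rw [← Finset.sum_mul]
      _ = A ^ (2:ℝ) * A ^ (q - 2) := by
          congr 1
          rw [hA]
          unfold lpNorm
          rw [← Real.rpow_mul (by positivity), one_div, inv_mul_cancel₀ (by norm_num : (2:ℝ) ≠ 0),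
            Real.rpow_one]
      _ = A ^ q := by
          rcases eq_or_lt_of_le hA0 with h0 | h0
          · rw [← h0, Real.zero_rpow hq0.ne', Real.zero_rpow (by norm_num : (2:ℝ) ≠ 0), zero_mul]
          · rw [← Real.rpow_add h0]; ring_nf
  calc lpNorm q w = (∑ j, |w j| ^ q) ^ (1/q) := rfl
    _ ≤ (A ^ q) ^ (1/q) := Real.rpow_le_rpow (by positivity) hsum (by positivity)
    _ = A := by
        rw [← Real.rpow_mul hA0, mul_one_div, div_self hq0.ne', Real.rpow_one]

lemma lpNorm_le_two_of_le {d : ℕ} {q : ℝ} (hq1 : 1 < q) (hq2 : q < 2) (w : Fin d → ℝ) :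
    lpNorm q w ≤ (d : ℝ) ^ ((1:ℝ)/q - 1/2) * lpNorm 2 w := by
  have hq0 : (0:ℝ) < q := by linarith
  have hconj : (2/q : ℝ).HolderConjugate (1 - q/2)⁻¹ := by
    rw [Real.holderConjugate_iff]
    constructor
    · rw [lt_div_iff₀ hq0]; linarith
    · rw [inv_inv, inv_div]; ring
  have holder := Real.inner_le_Lp_mul_Lq_of_nonneg (Finset.univ (α := Fin d)) hconj
    (f := fun j => |w j| ^ q) (g := fun _ => 1)
    (fun i _ => by positivity) (fun i _ => by norm_num)
  simp only [mul_one, Real.one_rpow, Finset.sum_const, Finset.card_univ, Fintype.card_fin,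
    nsmul_eq_mul] at holder
  have hpow : ∀ j : Fin d, (|w j| ^ q) ^ (2/q : ℝ) = |w j| ^ (2:ℝ) := by
    intro j
    rw [← Real.rpow_mul (abs_nonneg _), mul_div_cancel₀ _ hq0.ne']
  simp_rw [hpow] at holder
  -- holder : ∑ |w j|^q ≤ (∑ |w j|^2)^(1/(2/q)) * (d * 1)^(1/(1-q/2)⁻¹)
  have h1 : (1 : ℝ) / (2/q) = q/2 := by field_simp
  have h2 : (1 : ℝ) / ((1 - q/2)⁻¹) = 1 - q/2 := by rw [one_div, inv_inv]
  rw [h1, h2] at holder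
  have hfinal : lpNorm q w ≤ ((∑ j, |w j| ^ (2:ℝ)) ^ (q/2 : ℝ) * (d : ℝ) ^ (1 - q/2 : ℝ)) ^ (1/q) :=
    Real.rpow_le_rpow (by positivity) holder (by positivity)
  calc lpNorm q w ≤ _ := hfinal
    _ = (d : ℝ) ^ ((1:ℝ)/q - 1/2) * lpNorm 2 w := by
        rw [Real.mul_rpow (by positivity) (by positivity), ← Real.rpow_mul (by positivity),
          ← Real.rpow_mul (Nat.cast_nonneg d),
          show (q/2) * (1/q) = 1/2 by field_simp,
          show (1 - q/2) * (1/q) = 1/q - 1/2 by field_simp,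
          mul_comm]
        rfl

lemma rsign_not (b : Bool) : rsign (!b) = - rsign b := by cases b <;> simp [rsign]

lemma rsign_mul_self (b : Bool) : rsign b * rsign b = 1 := by cases b <;> simp [rsign]

lemma sum_rsign_mul {m : ℕ} {i j : Fin m} (hij : i ≠ j) :
    ∑ s : Fin m → Bool, rsign (s i) * rsign (s j) = 0 := by
  have hinv : Function.Involutive (fun s : Fin m → Bool => Function.update s i (!(s i))) := by
    intro s; ext k
    rcases eq_or_ne k i with rfl | hk
    · simp
    · simp [Function.update_of_ne hk]
  have h := Equiv.sum_comp (Function.Involutive.toPerm _ hinv) (fun s : Fin m → Bool => rsign (s i) * rsign (s j))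
  have h2 : ∀ s : Fin m → Bool,
      (fun s : Fin m → Bool => rsign (s i) * rsign (s j)) ((Function.Involutive.toPerm _ hinv) s)
        = - (rsign (s i) * rsign (s j)) := by
    intro s
    simp only [Function.Involutive.coe_toPerm]
    rw [Function.update_self, Function.update_of_ne (Ne.symm hij), rsign_not]
    ring
  rw [Finset.sum_congr rfl (fun s _ => h2 s), Finset.sum_neg_distrib] at h
  linarith

lemma sum_rsign_sq {m : ℕ} :
    ∑ s : Fin m → Bool, (∑ i, rsign (s i)) ^ 2 = 2 ^ m * m := by
  simp_rw [sq, Finset.sum_mul_sum]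
  rw [Finset.sum_comm]
  have hin : ∀ i : Fin m, ∑ s : Fin m → Bool, ∑ j, rsign (s i) * rsign (s j)
      = 2 ^ m := by
    intro i
    rw [Finset.sum_comm]
    have hj : ∀ j : Fin m, ∑ s : Fin m → Bool, rsign (s i) * rsign (s j)
        = if j = i then (2:ℝ) ^ m else 0 := by
      intro j
      rcases eq_or_ne j i with rfl | hj
      · simp_rw [rsign_mul_self, Finset.sum_const, Finset.card_univ]
        simp [Fintype.card_fun]
      · simp [hj, sum_rsign_mul (Ne.symm hj)]
    rw [Finset.sum_congr rfl (fun j _ => hj j), Finset.sum_ite_eq' Finset.univ i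
      (fun _ => (2:ℝ) ^ m)]
    simp
  rw [Finset.sum_congr rfl (fun i _ => hin i), Finset.sum_const, Finset.card_univ]
  simp [mul_comm]

lemma sum_abs_rsign_le {m : ℕ} :
    ∑ s : Fin m → Bool, |∑ i, rsign (s i)| ≤ 2 ^ m * Real.sqrt m := by
  have hcs := Finset.sum_mul_sq_le_sq_mul_sq Finset.univ
    (fun s : Fin m → Bool => |∑ i, rsign (s i)|) (fun _ => 1)
  simp only [mul_one, one_pow, Finset.sum_const, Finset.card_univ, nsmul_eq_mul,
    Fintype.card_fun, Fintype.card_fin, Fintype.card_bool] at hcs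
  simp_rw [sq_abs] at hcs
  rw [sum_rsign_sq] at hcs
  push_cast at hcs
  have h1 : ∑ s : Fin m → Bool, |∑ i, rsign (s i)|
      = Real.sqrt ((∑ s : Fin m → Bool, |∑ i, rsign (s i)|) ^ 2) := by
    rw [Real.sqrt_sq (Finset.sum_nonneg fun s _ => abs_nonneg _)]
  rw [h1]
  calc Real.sqrt ((∑ s : Fin m → Bool, |∑ i, rsign (s i)|) ^ 2)
      ≤ Real.sqrt (2 ^ m * m * 2 ^ m) := Real.sqrt_le_sqrt hcs
    _ = 2 ^ m * Real.sqrt m := by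
        rw [show (2:ℝ) ^ m * m * 2 ^ m = (2 ^ m) ^ 2 * m by ring,
          Real.sqrt_mul (by positivity), Real.sqrt_sq (by positivity)]

lemma sum_negpart_le {m : ℕ} :
    ∑ s : Fin m → Bool, max (-(∑ i, rsign (s i))) 0 ≤ 2 ^ m * Real.sqrt m / 2 := by
  have hsym : ∑ s : Fin m → Bool, max (-(∑ i, rsign (s i))) 0
      = ∑ s : Fin m → Bool, max (∑ i, rsign (s i)) 0 := by
    have hinv : Function.Involutive (fun s : Fin m → Bool => fun i => !(s i)) := by
      intro s; ext i; simp
    have h := Equiv.sum_comp (Function.Involutive.toPerm _ hinv)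
      (fun s : Fin m → Bool => max (-(∑ i, rsign (s i))) 0)
    rw [← h]
    refine Finset.sum_congr rfl fun s _ => ?_
    simp only [Function.Involutive.coe_toPerm, rsign_not, Finset.sum_neg_distrib, neg_neg]
  have key : (2:ℝ) * ∑ s : Fin m → Bool, max (-(∑ i, rsign (s i))) 0
      = ∑ s : Fin m → Bool, |∑ i, rsign (s i)| := by
    rw [two_mul]
    nth_rewrite 1 [hsym]
    rw [← Finset.sum_add_distrib]
    refine Finset.sum_congr rfl fun s _ => ?_
    rcases le_total 0 (∑ i, rsign (s i)) with h | h
    · rw [max_eq_left h, max_eq_right (neg_nonpos.mpr h), add_zero, abs_of_nonneg h]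
    · rw [max_eq_right h, max_eq_left (neg_nonneg.mpr h), zero_add, abs_of_nonpos h]
  linarith [sum_abs_rsign_le (m := m)]

/-- The adversarial Rademacher complexity of the `ℓ₂`-bounded linear class is at
most the standard one plus `(εW/(2√m))·max(d^{1/p*−1/2}, 1)`. -/
theorem adversarial_rademacher_bound {d m : ℕ} (hm : 0 < m)
    (p q : ℝ) (hpq : p.HolderConjugate q)
    (xs : Fin m → Fin d → ℝ) (ys : Fin m → ℝ) (hy : ∀ i, ys i = 1 ∨ ys i = -1)
    (ε : ℝ) (hε : 0 ≤ ε) (W : ℝ) (hW : 0 < W) :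
    ((2 : ℝ) ^ m)⁻¹ * ∑ s : Fin m → Bool,
        sSup {v : ℝ | ∃ w : Fin d → ℝ, lpNorm 2 w ≤ W ∧
          v = (1 / (m : ℝ)) * ∑ i, rsign (s i) *
            sInf {u : ℝ | ∃ x' : Fin d → ℝ, lpNorm p (x' - xs i) ≤ ε ∧
              u = ys i * dotp w x'}}
      ≤
    ((2 : ℝ) ^ m)⁻¹ * (∑ s : Fin m → Bool,
        sSup {v : ℝ | ∃ w : Fin d → ℝ, lpNorm 2 w ≤ W ∧
          v = (1 / (m : ℝ)) * ∑ i, rsign (s i) * dotp w (xs i)})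
      + ε * W / (2 * Real.sqrt m) *
          max ((d : ℝ) ^ ((1 : ℝ) / q - 1 / 2)) 1 := by
  classical
  set M : ℝ := max ((d : ℝ) ^ ((1 : ℝ) / q - 1 / 2)) 1 with hM
  have hM1 : (1:ℝ) ≤ M := le_max_right _ _
  have hM0 : (0:ℝ) < M := lt_of_lt_of_le one_pos hM1
  have hq1 : 1 < q := hpq.symm.lt
  have h22 : (2:ℝ).HolderConjugate 2 := Real.holderConjugate_iff.mpr ⟨one_lt_two, by norm_num⟩
  have hlpmax : ∀ w : Fin d → ℝ, lpNorm 2 w ≤ W → lpNorm q w ≤ M * W := by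
    intro w hw
    have h1 : lpNorm q w ≤ M * lpNorm 2 w := by
      rcases le_or_gt 2 q with h2 | h2
      · calc lpNorm q w ≤ lpNorm 2 w := lpNorm_le_two_of_ge h2 w
          _ ≤ M * lpNorm 2 w := le_mul_of_one_le_left (lpNorm_nonneg 2 w) hM1
      · calc lpNorm q w ≤ (d : ℝ) ^ ((1:ℝ)/q - 1/2) * lpNorm 2 w :=
            lpNorm_le_two_of_le hq1 h2 w
          _ ≤ M * lpNorm 2 w :=
            mul_le_mul_of_nonneg_right (le_max_left _ _) (lpNorm_nonneg 2 w)
    calc lpNorm q w ≤ M * lpNorm 2 w := h1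
      _ ≤ M * W := mul_le_mul_of_nonneg_left hw hM0.le
  -- the mask involution
  set t : (Fin m → Bool) → (Fin m → Bool) :=
    fun s i => if ys i = 1 then s i else !(s i) with ht
  have htinv : Function.Involutive t := by
    intro s; ext i
    rcases hy i with h | h <;> simp [ht, h, (by norm_num : ¬(-1:ℝ) = 1)]
  have htsign : ∀ (s : Fin m → Bool) (i : Fin m), rsign (t s i) = ys i * rsign (s i) := by
    intro s i
    rcases hy i with h | h
    · simp [ht, h]
    · have : ¬ (ys i = 1) := by rw [h]; norm_num
      simp [ht, this, h, rsign_not, (by norm_num : ¬(-1:ℝ) = 1)]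
  -- the standard class sets
  set Hset : (Fin m → Bool) → Set ℝ := fun s =>
    {v : ℝ | ∃ w : Fin d → ℝ, lpNorm 2 w ≤ W ∧
      v = (1 / (m : ℝ)) * ∑ i, rsign (s i) * dotp w (xs i)} with hHset
  have hHne : ∀ s, (Hset s).Nonempty := by
    intro s
    exact ⟨_, 0, by simp [lpNorm_zero (by norm_num : (2:ℝ) ≠ 0), hW.le], rfl⟩
  have hHbdd : ∀ s, BddAbove (Hset s) := by
    intro s
    refine ⟨∑ i, W * lpNorm 2 (xs i), ?_⟩
    rintro v ⟨w, hw, rfl⟩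
    have hterm : ∀ i : Fin m, rsign (s i) * dotp w (xs i) ≤ W * lpNorm 2 (xs i) := by
      intro i
      have h1 : |rsign (s i) * dotp w (xs i)| ≤ W * lpNorm 2 (xs i) := by
        rw [abs_mul]
        have h2 : |rsign (s i)| = 1 := by cases s i <;> simp [rsign]
        rw [h2, one_mul]
        calc |dotp w (xs i)| ≤ lpNorm 2 w * lpNorm 2 (xs i) := dotp_holder h22 w (xs i)
          _ ≤ W * lpNorm 2 (xs i) :=
            mul_le_mul_of_nonneg_right hw (lpNorm_nonneg 2 (xs i))
      linarith [le_abs_self (rsign (s i) * dotp w (xs i))]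
    have hsum : ∑ i, rsign (s i) * dotp w (xs i) ≤ ∑ i, W * lpNorm 2 (xs i) :=
      Finset.sum_le_sum fun i _ => hterm i
    have hB : 0 ≤ ∑ i, W * lpNorm 2 (xs i) :=
      Finset.sum_nonneg fun i _ => mul_nonneg hW.le (lpNorm_nonneg 2 (xs i))
    have h1m : (0:ℝ) < 1 / m := by positivity
    have h1m' : (1:ℝ) / m ≤ 1 := by
      rw [div_le_one (by exact_mod_cast hm)]
      exact_mod_cast hm
    calc (1 / (m:ℝ)) * ∑ i, rsign (s i) * dotp w (xs i)
        ≤ (1 / (m:ℝ)) * ∑ i, W * lpNorm 2 (xs i) :=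
          mul_le_mul_of_nonneg_left hsum h1m.le
      _ ≤ 1 * ∑ i, W * lpNorm 2 (xs i) := mul_le_mul_of_nonneg_right h1m' hB
      _ = _ := one_mul _
  -- per-sign-vector bound
  have hper : ∀ s : Fin m → Bool,
      sSup {v : ℝ | ∃ w : Fin d → ℝ, lpNorm 2 w ≤ W ∧
          v = (1 / (m : ℝ)) * ∑ i, rsign (s i) *
            sInf {u : ℝ | ∃ x' : Fin d → ℝ, lpNorm p (x' - xs i) ≤ ε ∧
              u = ys i * dotp w x'}}
        ≤ sSup (Hset (t s)) + ε * W * M / m * max (-(∑ i, rsign (s i))) 0 := by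
    intro s
    refine csSup_le ⟨_, 0, by simp [lpNorm_zero (by norm_num : (2:ℝ) ≠ 0), hW.le], rfl⟩ ?_
    rintro v ⟨w, hw, rfl⟩
    have hrw : ∀ i : Fin m,
        rsign (s i) * sInf {u : ℝ | ∃ x' : Fin d → ℝ, lpNorm p (x' - xs i) ≤ ε ∧
            u = ys i * dotp w x'}
          = rsign (t s i) * dotp w (xs i) - rsign (s i) * (ε * lpNorm q w) := by
      intro i
      rw [sInf_robust hpq (xs i) w (hy i) hε, htsign]
      ring
    rw [Finset.sum_congr rfl fun i _ => hrw i, Finset.sum_sub_distrib, mul_sub,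
      ← Finset.sum_mul]
    have hmem : (1 / (m : ℝ)) * ∑ i, rsign (t s i) * dotp w (xs i) ∈ Hset (t s) :=
      ⟨w, hw, rfl⟩
    have h1 : (1 / (m : ℝ)) * ∑ i, rsign (t s i) * dotp w (xs i) ≤ sSup (Hset (t s)) :=
      le_csSup (hHbdd (t s)) hmem
    have h2 : -((1 / (m:ℝ)) * ((∑ i, rsign (s i)) * (ε * lpNorm q w)))
        ≤ ε * W * M / m * max (-(∑ i, rsign (s i))) 0 := by
      have hc0 : 0 ≤ ε * lpNorm q w / m :=
        div_nonneg (mul_nonneg hε (lpNorm_nonneg q w)) (Nat.cast_nonneg m)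
      have hcle : ε * lpNorm q w / m ≤ ε * W * M / m := by
        have hnum : ε * lpNorm q w ≤ ε * W * M := by
          calc ε * lpNorm q w ≤ ε * (M * W) :=
              mul_le_mul_of_nonneg_left (hlpmax w hw) hε
            _ = ε * W * M := by ring
        exact div_le_div_of_nonneg_right hnum (Nat.cast_nonneg m)
      have hT : -(∑ i, rsign (s i)) ≤ max (-(∑ i, rsign (s i))) 0 := le_max_left _ _
      have hmax0 : 0 ≤ max (-(∑ i, rsign (s i))) 0 := le_max_right _ _
      calc -((1 / (m:ℝ)) * ((∑ i, rsign (s i)) * (ε * lpNorm q w)))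
          = (ε * lpNorm q w / m) * (-(∑ i, rsign (s i))) := by ring
        _ ≤ (ε * lpNorm q w / m) * max (-(∑ i, rsign (s i))) 0 :=
            mul_le_mul_of_nonneg_left hT hc0
        _ ≤ ε * W * M / m * max (-(∑ i, rsign (s i))) 0 :=
            mul_le_mul_of_nonneg_right hcle hmax0
    linarith
  -- sum the per-s bounds
  have hsum1 : ((2 : ℝ) ^ m)⁻¹ * ∑ s : Fin m → Bool,
      sSup {v : ℝ | ∃ w : Fin d → ℝ, lpNorm 2 w ≤ W ∧
          v = (1 / (m : ℝ)) * ∑ i, rsign (s i) *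
            sInf {u : ℝ | ∃ x' : Fin d → ℝ, lpNorm p (x' - xs i) ≤ ε ∧
              u = ys i * dotp w x'}}
      ≤ ((2 : ℝ) ^ m)⁻¹ * ∑ s : Fin m → Bool,
        (sSup (Hset (t s)) + ε * W * M / m * max (-(∑ i, rsign (s i))) 0) := by
    apply mul_le_mul_of_nonneg_left _ (by positivity)
    exact Finset.sum_le_sum fun s _ => hper s
  refine le_trans hsum1 ?_
  rw [Finset.sum_add_distrib, mul_add]
  have hre : ∑ s : Fin m → Bool, sSup (Hset (t s)) = ∑ s : Fin m → Bool, sSup (Hset s) :=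
    Equiv.sum_comp (Function.Involutive.toPerm _ htinv) (fun s => sSup (Hset s))
  rw [hre]
  apply add_le_add_right
  have hnp := sum_negpart_le (m := m)
  have hC : 0 ≤ ε * W * M / m :=
    div_nonneg (by positivity) (Nat.cast_nonneg m)
  calc ((2:ℝ)^m)⁻¹ * ∑ s : Fin m → Bool, ε*W*M/m * max (-(∑ i, rsign (s i))) 0
      = ((2:ℝ)^m)⁻¹ * (ε*W*M/m * ∑ s : Fin m → Bool, max (-(∑ i, rsign (s i))) 0) := by
        rw [← Finset.mul_sum]
    _ ≤ ((2:ℝ)^m)⁻¹ * (ε*W*M/m * ((2:ℝ)^m * Real.sqrt m / 2)) := by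
        apply mul_le_mul_of_nonneg_left (mul_le_mul_of_nonneg_left hnp hC) (by positivity)
    _ = ε * W / (2 * Real.sqrt m) * M := by
        have hm0 : (0:ℝ) < m := by exact_mod_cast hm
        have hs0 : 0 < Real.sqrt m := Real.sqrt_pos.mpr hm0
        have hss : Real.sqrt m * Real.sqrt m = (m:ℝ) := Real.mul_self_sqrt (Nat.cast_nonneg m)
        field_simp
        linear_combination ε * hss
end
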